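/- For any finite group G of order at least 3, the Cayley table latin square S = {(r,c,r·c) : r,c ∈ G} is not K_{3,3}-free; that is, the latin square graph Γ(S) contains an induced subgraph isomorphic to K_{3,3}. -/
import Mathlib


/-- The Cayley table of a group, as a set of triples. -/
def CayleyTable (G : Type*) [Group G] : Set (G × G × G) :=
  {t | t.2.2 = t.1 * t.2.1}

/-- The latin square graph of the Cayley table: distinct triples are adjacent iff they
agree in at least one coordinate. -/
def CayleyGraph (G : Type*) [Group G] : SimpleGraph (CayleyTable G) :=
  SimpleGraph.fromRel (fun u v =>
    (u : G × G × G).1 = (v : G × G × G).1 ∨ (u : G × G × G).2.1 = (v : G × G × G).2.1 ∨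
      (u : G × G × G).2.2 = (v : G × G × G).2.2)

lemma exists_comm_pair (G : Type*) [Group G] [Fintype G] (h : 3 ≤ Fintype.card G) :
    ∃ x y : G, x * y = y * x ∧ x ≠ 1 ∧ y ≠ 1 ∧ x * y ≠ 1 := by
  by_cases hsq : ∃ x : G, x * x ≠ 1
  · obtain ⟨x, hx⟩ := hsq
    have hx1 : x ≠ 1 := by rintro rfl; simp at hx
    exact ⟨x, x, rfl, hx1, hx1, hx⟩
  · push_neg at hsq
    have hinv : ∀ a : G, a⁻¹ = a := fun a =>
      (inv_eq_of_mul_eq_one_right (hsq a))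
    have comm : ∀ a b : G, a * b = b * a := fun a b => by
      have := hsq (a * b)
      have h2 : (a * b)⁻¹ = a * b := inv_eq_of_mul_eq_one_right this
      rw [← h2, mul_inv_rev, hinv, hinv]
    classical
    obtain ⟨x, hx⟩ := Fintype.exists_ne_of_one_lt_card (by omega) (1 : G)
    have : ∃ y : G, y ≠ 1 ∧ y ≠ x := by
      by_contra hcon
      push_neg at hcon
      have hsub : (Finset.univ : Finset G) ⊆ {1, x} := by
        intro z _
        by_cases hz : z = 1
        · simp [hz]
        · simp [hcon z hz]
      have := Finset.card_le_card hsub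
      have h2 : ({1, x} : Finset G).card ≤ 2 := Finset.card_insert_le _ _ |>.trans (by simp)
      simp [Finset.card_univ] at this
      omega
    obtain ⟨y, hy1, hyx⟩ := this
    refine ⟨x, y, comm x y, hx, hy1, fun h1 => hyx ?_⟩
    have : y = x⁻¹ := eq_inv_of_mul_eq_one_left (by rw [comm]; exact h1)
    rw [this, hinv]

set_option maxHeartbeats 2000000 in
theorem stmt2 (G : Type*) [Group G] [Fintype G] (h : 3 ≤ Fintype.card G) :
    ∃ s : Set (CayleyTable G),
      Nonempty ((CayleyGraph G).induce s ≃g completeBipartiteGraph (Fin 3) (Fin 3)) := by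
  obtain ⟨x, y, hc, hx, hy, hxy⟩ := exists_comm_pair G h
  have hx' : (1 : G) ≠ x := hx.symm
  have hy' : (1 : G) ≠ y := hy.symm
  have hxy' : (1 : G) ≠ x * y := hxy.symm
  have hxyx : x * y ≠ x := by simpa using hy
  have hxyx' : x ≠ x * y := hxyx.symm
  have hxyy : x * y ≠ y := by simpa using hx
  have hxyy' : y ≠ x * y := hxyy.symm
  have hix : x⁻¹ ≠ 1 := by simpa using hx
  have hix' : (1 : G) ≠ x⁻¹ := hix.symm
  have hiy : x⁻¹ ≠ y := by intro h1; apply hxy; rw [← h1]; simp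
  have hiy' : y ≠ x⁻¹ := hiy.symm
  let A : Fin 3 ⊕ Fin 3 → G × G × G := fun i => match i with
    | .inl 0 => (1, 1, 1)
    | .inl 1 => (x, y, x * y)
    | .inl 2 => (x * y, x⁻¹, y)
    | .inr 0 => (1, y, y)
    | .inr 1 => (x, x⁻¹, 1)
    | .inr 2 => (x * y, 1, x * y)
  have hmem : ∀ i, A i ∈ CayleyTable G := by
    rintro (⟨i, hi⟩ | ⟨i, hi⟩) <;> interval_cases i <;>
      simp [A, CayleyTable] <;> group <;> rw [hc] <;> group
  let f : Fin 3 ⊕ Fin 3 → CayleyTable G := fun i => ⟨A i, hmem i⟩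
  have hinj : Function.Injective f := by
    rintro (⟨a, ha⟩ | ⟨a, ha⟩) (⟨b, hb⟩ | ⟨b, hb⟩) hab <;>
      interval_cases a <;> interval_cases b <;>
      first
        | rfl
        | (exfalso
           simp only [f, A, Subtype.mk.injEq, Prod.mk.injEq] at hab
           tauto)
  refine ⟨Set.range f, ⟨(RelIso.mk (Equiv.ofInjective f hinj) ?_).symm⟩⟩
  intro a b
  show (CayleyGraph G).Adj (f a) (f b) ↔ _
  have cg : ∀ u v : CayleyTable G, (CayleyGraph G).Adj u v ↔
      ((u : G × G × G) ≠ v ∧ ((u : G × G × G).1 = (v : G × G × G).1 ∨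
        (u : G × G × G).2.1 = (v : G × G × G).2.1 ∨
        (u : G × G × G).2.2 = (v : G × G × G).2.2)) := by
    intro u v
    rw [CayleyGraph, SimpleGraph.fromRel_adj]
    constructor
    · rintro ⟨hne, hr | hr⟩
      · exact ⟨fun hh => hne (Subtype.ext hh), hr⟩
      · refine ⟨fun hh => hne (Subtype.ext hh), ?_⟩
        rcases hr with hh | hh | hh <;> simp [hh]
    · rintro ⟨hne, hr⟩
      exact ⟨fun hh => hne (congrArg _ hh), Or.inl hr⟩
  rw [cg]
  obtain (a | a) := a <;> obtain (b | b) := b <;>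
    fin_cases a <;> fin_cases b <;>
    · simp only [f, A, completeBipartiteGraph, ne_eq, Prod.mk.injEq, Sum.isLeft, Sum.isRight]
      tauto
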